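/- Define E(x,h) = φ(x,h) − (√(2x²) − R₀) where φ(x,h) = 2x√(h²+2hx+2x²)/(h+2x) − R₀. Then for each fixed x > 0, E(x,h) = O(h²) as h → 0⁺; precisely, lim_{h→0⁺} E(x,h)/h² exists and is finite. -/

import Mathlib

/-- The AFMM diagonal level-set error
`E(x,h) = 2x√(h²+2hx+2x²)/(h+2x) − √(2x²)` is `O(h²)` as `h → 0⁺` for each fixed
`x > 0`: the limit of `E(x,h)/h²` exists and is finite. -/
theorem afmm_level_set_error_second_order (x : ℝ) (hx : 0 < x) :
    ∃ L : ℝ, Filter.Tendsto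
      (fun h : ℝ =>
        (2 * x * Real.sqrt (h ^ 2 + 2 * h * x + 2 * x ^ 2) / (h + 2 * x)
          - Real.sqrt (2 * x ^ 2)) / h ^ 2)
      (nhdsWithin 0 (Set.Ioi 0)) (nhds L) := by
  set c : ℝ := Real.sqrt (2 * x ^ 2) with hcdef
  have hc0 : 0 < c := Real.sqrt_pos.mpr (by positivity)
  have hc2 : c ^ 2 = 2 * x ^ 2 := Real.sq_sqrt (by positivity)
  set G : ℝ → ℝ := fun h =>
    2 * x ^ 2 / ((h + 2 * x) *
      (2 * x * Real.sqrt (h ^ 2 + 2 * h * x + 2 * x ^ 2) + c * (h + 2 * x))) with hGdef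
  refine ⟨G 0, ?_⟩
  have hGcont : ContinuousAt G 0 := by
    have hden : Continuous fun h : ℝ =>
        (h + 2 * x) * (2 * x * Real.sqrt (h ^ 2 + 2 * h * x + 2 * x ^ 2) + c * (h + 2 * x)) := by
      have hs : Continuous fun h : ℝ => Real.sqrt (h ^ 2 + 2 * h * x + 2 * x ^ 2) :=
        Real.continuous_sqrt.comp (by continuity)
      continuity
    have hs0 : 0 < Real.sqrt ((0:ℝ) ^ 2 + 2 * 0 * x + 2 * x ^ 2) :=
      Real.sqrt_pos.mpr (by norm_num; positivity)
    have hne : ((0:ℝ) + 2 * x) *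
        (2 * x * Real.sqrt ((0:ℝ) ^ 2 + 2 * 0 * x + 2 * x ^ 2) + c * (0 + 2 * x)) ≠ 0 := by
      positivity
    exact ContinuousAt.div continuousAt_const hden.continuousAt hne
  have hGtend : Filter.Tendsto G (nhdsWithin 0 (Set.Ioi 0)) (nhds (G 0)) :=
    hGcont.continuousWithinAt.tendsto
  have heq : G =ᶠ[nhdsWithin 0 (Set.Ioi 0)] fun h : ℝ =>
      (2 * x * Real.sqrt (h ^ 2 + 2 * h * x + 2 * x ^ 2) / (h + 2 * x) - c) / h ^ 2 := by
    filter_upwards [self_mem_nhdsWithin] with h hh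
    have hh0 : 0 < h := hh
    set s : ℝ := Real.sqrt (h ^ 2 + 2 * h * x + 2 * x ^ 2) with hsdef
    have hspos : 0 < s := Real.sqrt_pos.mpr (by nlinarith)
    have hs2 : s ^ 2 = h ^ 2 + 2 * h * x + 2 * x ^ 2 := Real.sq_sqrt (by nlinarith)
    have h1 : h + 2 * x ≠ 0 := by positivity
    have h2 : 2 * x * s + c * (h + 2 * x) ≠ 0 := by positivity
    have h3 : h ≠ 0 := ne_of_gt hh0
    clear_value s c
    simp only [hGdef, ← hsdef, ← hcdef]
    field_simp
    ring_nf
    linear_combination (-(4*x^2)) * hs2 + ((h + 2*x)^2) * hc2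
  exact Filter.Tendsto.congr' heq hGtend
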